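/- Fix a finite universe X and a database D ∈ ℝ^X. Consider the Frieze/Kannan update: given a current hypothesis D^t ∈ ℝ^X and a query Q ∈ [0,1]^X (a linear query evaluated as Q(D) = Σ_{i∈X} Q(i)·D(i)) with Q(D^t) - Q(D) ≥ α, set D^{t+1} = D^t - (α/|X|)·Q. Then ‖D - D^t‖₂² - ‖D - D^{t+1}‖₂² ≥ α²/|X|. -/

import Mathlib

open BigOperators

/-- Per-step potential drop of the Frieze/Kannan update: if the linear query
`Q` overestimates, `Q(Dᵗ) - Q(D) ≥ α`, then subtracting `(α/|X|) • Q`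
decreases the squared `ℓ₂` distance to `D` by at least `α²/|X|`. -/
theorem friezeKannan_potential_drop
    {X : Type*} [Fintype X] [Nonempty X]
    (D Dt Q : X → ℝ) (hQ : ∀ i, Q i ∈ Set.Icc (0 : ℝ) 1)
    (α : ℝ) (hα : 0 < α)
    (hdist : α ≤ ∑ i, Q i * Dt i - ∑ i, Q i * D i)
    (Dnext : X → ℝ)
    (hupd : Dnext = fun i => Dt i - α / (Fintype.card X) * Q i) :
    α ^ 2 / (Fintype.card X) ≤
      (∑ i, (D i - Dt i) ^ 2) - ∑ i, (D i - Dnext i) ^ 2 := by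
  subst hupd
  set n : ℝ := (Fintype.card X : ℝ) with hn
  have hnpos : (0:ℝ) < n := by
    rw [hn]; exact Nat.cast_pos.mpr (Fintype.card_pos (α := X))
  set c : ℝ := α / n with hc
  have hcpos : 0 < c := div_pos hα hnpos
  have key : ∀ i, (D i - Dt i) ^ 2 - (D i - (Dt i - c * Q i)) ^ 2
      = 2 * c * (Q i * Dt i - Q i * D i) - c ^ 2 * (Q i) ^ 2 := by
    intro i; ring
  rw [← Finset.sum_sub_distrib]
  calc α ^ 2 / n = 2 * c * α - c ^ 2 * n := by
        field_simp [hc]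
        have h1 : n * c = α := by rw [hc]; field_simp [hnpos.ne']
        linear_combination (n * c - α) * h1
    _ ≤ 2 * c * (∑ i, Q i * Dt i - ∑ i, Q i * D i) - c ^ 2 * ∑ i : X, (Q i) ^ 2 := by
        gcongr
        calc (∑ i : X, (Q i) ^ 2) ≤ ∑ _i : X, (1:ℝ) := by
              apply Finset.sum_le_sum
              intro i _
              have h := hQ i
              nlinarith [h.1, h.2]
          _ = n := by simp [hn]
    _ = ∑ i, ((D i - Dt i) ^ 2 - (D i - (Dt i - c * Q i)) ^ 2) := by
        simp_rw [key]
        rw [Finset.sum_sub_distrib, ← Finset.mul_sum, Finset.sum_sub_distrib, ← Finset.mul_sum]
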